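/- Let P be a finite set with succ : P \to Finset P and a 1-valued edge labeling \lambda : edges \to {0,1}, and let d = max_p |succ(p)|. Define the bivariate polynomials F(x,y) = \sum_p \sum_{S \subseteq succ(p)} x^{corem(p,S)} y^{rem_1(p,S)} and H(x,y) = \sum_p x^{out(p)} y^{mrk_1(p)}. Then H(x,y) = (x-1)^d F(1/(x-1), (x(y-1)+1)/(x-1)) as an identity of rational functions over \mathbb{Q}. -/
import Mathlib


open Finset

private lemma filt_sdiff {α : Type*} [DecidableEq α] (s t : Finset α) (P : α → Prop)
    [DecidablePred P] : (s \ t).filter P = s.filter P \ t.filter P := by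
  ext a; simp only [mem_filter, mem_sdiff]; tauto

private lemma key_sum {α : Type*} [DecidableEq α] {K : Type*} [Field K] (x y : K)
    (s : Finset α) (P : α → Prop) [DecidablePred P] :
    ∑ S ∈ s.powerset, (x - 1) ^ S.card *
        (x * (y - 1) + 1) ^ ((s.filter P).card - (S.filter P).card)
      = x ^ s.card * y ^ (s.filter P).card := by
  have h := Finset.prod_add (fun _ : α => x - 1)
    (fun i => if P i then x * (y - 1) + 1 else 1) s
  have hL : (∏ i ∈ s, ((x - 1) + if P i then x * (y - 1) + 1 else 1))
      = x ^ s.card * y ^ (s.filter P).card := by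
    have : (∏ i ∈ s, ((x - 1) + if P i then x * (y - 1) + 1 else 1))
        = ∏ i ∈ s, (if P i then x * y else x) := by
      apply Finset.prod_congr rfl
      intro i _
      by_cases hP : P i <;> simp [hP] <;> ring
    rw [this, Finset.prod_ite, Finset.prod_const, Finset.prod_const, mul_pow]
    have hc : (s.filter P).card + (s.filter (fun i => ¬ P i)).card = s.card :=
      Finset.card_filter_add_card_filter_not _
    rw [← hc, pow_add]
    ring
  rw [← hL, h]
  apply Finset.sum_congr rfl
  intro t ht
  rw [Finset.mem_powerset] at ht
  rw [Finset.prod_const, Finset.prod_ite, Finset.prod_const, Finset.prod_const, one_pow,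
    mul_one]
  congr 2
  rw [filt_sdiff, Finset.card_sdiff_of_subset (Finset.filter_subset_filter _ ht)]

/-- The inverse `H = (x-1)^d F(1/(x-1), (x(y-1)+1)/(x-1))` correspondence for a finite set `P`
with successor sets and a `1`-valued (Boolean) edge marking, stated in a field where `x - 1`
is invertible (the field of rational functions `ℚ(x,y)`).  Here `out p = |succ p|`,
`mrk p` is the number of marked successors of `p`, and for `S ⊆ succ p`,
`rem₁(p,S) = mrk p - #{s ∈ S : (p,s) marked}` and `corem(p,S) = d - |S| - rem₁(p,S)`. -/
theorem stmt_4 {α : Type*} [Fintype α] [DecidableEq α]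
    (succ : α → Finset α) (mark : α → α → Bool)
    (d : ℕ) (hd : ∀ p, (succ p).card ≤ d)
    (K : Type*) [Field K] (x y : K) (hx1 : x - 1 ≠ 0) :
    (∑ p : α, x ^ (succ p).card * y ^ ((succ p).filter fun q => mark p q = true).card) =
      (x - 1) ^ d * ∑ p : α, ∑ S ∈ (succ p).powerset,
        (1 / (x - 1)) ^ (d - S.card -
            (((succ p).filter fun q => mark p q = true).card -
              (S.filter fun q => mark p q = true).card)) *
          ((x * (y - 1) + 1) / (x - 1)) ^
            (((succ p).filter fun q => mark p q = true).card -
              (S.filter fun q => mark p q = true).card) := by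
  rw [Finset.mul_sum]
  apply Finset.sum_congr rfl
  intro p _
  rw [Finset.mul_sum]
  rw [← key_sum x y (succ p) (fun q => mark p q = true)]
  apply Finset.sum_congr rfl
  intro S hS
  rw [Finset.mem_powerset] at hS
  set m := ((succ p).filter fun q => mark p q = true).card with hm
  set a := (S.filter fun q => mark p q = true).card with ha
  set c := S.card with hc
  -- card facts
  have hAle : a ≤ m := Finset.card_le_card (Finset.filter_subset_filter _ hS)
  have hsplit : a + (S.filter (fun q => ¬ mark p q = true)).card = c :=
    Finset.card_filter_add_card_filter_not _
  have hsplit' : m + ((succ p).filter (fun q => ¬ mark p q = true)).card = (succ p).card :=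
    Finset.card_filter_add_card_filter_not _
  have hble : (S.filter (fun q => ¬ mark p q = true)).card
      ≤ ((succ p).filter (fun q => ¬ mark p q = true)).card :=
    Finset.card_le_card (Finset.filter_subset_filter _ hS)
  have hcd : c + (m - a) ≤ d := by
    have := hd p
    omega
  set r := m - a with hr
  have hkey : d - (d - c - r) - r = c := by omega
  have hexp : d = (d - c - r) + r + c := by omega
  have h1 : ∀ k : ℕ, (x - 1) ^ k * (1 / (x - 1)) ^ k = 1 := fun k => by
    rw [one_div, ← mul_pow, mul_inv_cancel₀ hx1, one_pow]
  have hexp' : (x - 1) ^ d = (x - 1) ^ (d - c - r) * (x - 1) ^ r * (x - 1) ^ c := by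
    rw [← pow_add, ← pow_add, show d - c - r + r + c = d from by omega]
  calc (x - 1) ^ c * (x * (y - 1) + 1) ^ r
      = ((x - 1) ^ (d - c - r) * (1 / (x - 1)) ^ (d - c - r)) *
          (((x - 1) ^ r * (1 / (x - 1)) ^ r) * ((x - 1) ^ c * (x * (y - 1) + 1) ^ r)) := by
        rw [h1, h1, one_mul, one_mul]
    _ = (x - 1) ^ d *
        ((1 / (x - 1)) ^ (d - c - r) * ((x * (y - 1) + 1) / (x - 1)) ^ r) := by
        rw [hexp', div_pow (x * (y - 1) + 1) (x - 1) r]; ring
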